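/- Let H be a complete bipartite graph with parts L and R of equal size N, where edges of a subset E' ⊆ L×R have weight 1 and all other edges have weight 2. If the maximum size of a matching using only E'-edges is k, then the minimum cost of a semi-matching in H equals 2N − k. -/

import Mathlib

/-- A matching in the complete bipartite graph on `Fin N × Fin N`. -/
def IsMatching {N : ℕ} (Mt : Finset (Fin N × Fin N)) : Prop :=
  ∀ e ∈ Mt, ∀ e' ∈ Mt, e ≠ e' → e.1 ≠ e'.1 ∧ e.2 ≠ e'.2

/-- The total makespan of scheduling tasks with the given list of weights in
the given order: the sum over `i` of the sum of the first `i` weights. -/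
def listCost (l : List ℕ) : ℕ :=
  ∑ i ∈ Finset.range l.length, (l.take (i + 1)).sum

/-- The cost of a machine that got the multiset `ws` of task weights:
the minimum, over all orderings of the tasks, of the total makespan. -/
noncomputable def nodeCost (ws : Multiset ℕ) : ℕ :=
  sInf {c | ∃ l : List ℕ, (l : Multiset ℕ) = ws ∧ c = listCost l}

/-- The cost of a semi-matching `f : L → R` (in a complete bipartite graph,
a semi-matching is just a function assigning to each left node a right node):
the sum over right nodes `r` of the cost of the multiset of weights of the
edges matched to `r`. -/
noncomputable def semiMatchingCost {N : ℕ} (w : Fin N → Fin N → ℕ) (f : Fin N → Fin N) : ℕ :=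
  ∑ r : Fin N, nodeCost (((Finset.univ.filter fun l => f l = r)).val.map fun l => w l r)

lemma nodeCost_spec (ws : Multiset ℕ) :
    ∃ l : List ℕ, (l : Multiset ℕ) = ws ∧ nodeCost ws = listCost l := by
  have hne : {c | ∃ l : List ℕ, (l : Multiset ℕ) = ws ∧ c = listCost l}.Nonempty :=
    ⟨listCost ws.toList, ws.toList, ws.coe_toList, rfl⟩
  exact Nat.sInf_mem hne

lemma nodeCost_singleton (a : ℕ) : nodeCost {a} = a := by
  have : {c | ∃ l : List ℕ, (l : Multiset ℕ) = ({a} : Multiset ℕ) ∧ c = listCost l} = {a} := by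
    ext c
    simp only [Set.mem_setOf_eq, Set.mem_singleton_iff]
    constructor
    · rintro ⟨l, hl, rfl⟩
      have : l = [a] := by simpa using hl
      simp [this, listCost]
    · rintro rfl
      exact ⟨[c], by simp, by simp [listCost]⟩
  rw [nodeCost, this, csInf_singleton]

lemma listCost_lb (c : ℕ) (l : List ℕ) (h : ∀ x ∈ l, c ≤ x) :
    ∑ i ∈ Finset.range l.length, c * (i + 1) ≤ listCost l := by
  apply Finset.sum_le_sum
  intro i hi
  rw [Finset.mem_range] at hi
  have hlen : (l.take (i + 1)).length = i + 1 := by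
    rw [List.length_take]; omega
  calc c * (i + 1) = (l.take (i+1)).length • c := by rw [hlen]; simp [mul_comm]
    _ ≤ (l.take (i+1)).sum := by
        apply List.card_nsmul_le_sum
        intro x hx
        exact h x (List.mem_of_mem_take hx)

lemma nodeCost_lb_one (ws : Multiset ℕ) (h : ∀ x ∈ ws, 1 ≤ x) :
    2 * Multiset.card ws ≤ nodeCost ws + 1 := by
  obtain ⟨l, hl, hc⟩ := nodeCost_spec ws
  have hlen : l.length = Multiset.card ws := by rw [← hl]; simp
  have h1 : ∑ i ∈ Finset.range l.length, 1 * (i + 1) ≤ listCost l := by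
    apply listCost_lb
    intro x hx
    exact h x (by rw [← hl]; exact hx)
  set n := l.length with hn
  have h2 : ∑ i ∈ Finset.range n, 1 * (i + 1) = (∑ i ∈ Finset.range n, i) + n := by
    simp [Finset.sum_add_distrib]
  have h3 : n ≤ (∑ i ∈ Finset.range n, i) + 1 := by
    rcases Nat.eq_zero_or_pos n with h0 | h0
    · omega
    · have : n - 1 ≤ ∑ i ∈ Finset.range n, i :=
        Finset.single_le_sum (f := fun i => i) (fun _ _ => Nat.zero_le _)
          (Finset.mem_range.mpr (by omega))
      omega
  omega

lemma nodeCost_lb_two (ws : Multiset ℕ) (h : ∀ x ∈ ws, 2 ≤ x) :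
    2 * Multiset.card ws ≤ nodeCost ws := by
  obtain ⟨l, hl, hc⟩ := nodeCost_spec ws
  have hlen : l.length = Multiset.card ws := by rw [← hl]; simp
  have h1 : ∑ i ∈ Finset.range l.length, 2 * (i + 1) ≤ listCost l := by
    apply listCost_lb
    intro x hx
    exact h x (by rw [← hl]; exact hx)
  have h2 : ∑ i ∈ Finset.range l.length, 2 ≤ ∑ i ∈ Finset.range l.length, 2 * (i+1) :=
    Finset.sum_le_sum (fun i _ => by omega)
  simp only [Finset.sum_const, Finset.card_range, smul_eq_mul] at h2
  omega

/-- Let `H` be a complete bipartite graph with parts of size `N`, where the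
edges of `E'` have weight `1` and all other edges weight `2`.  If the maximum
size of a matching using only `E'`-edges is `k`, then the minimum cost of a
semi-matching in `H` equals `2N − k`. -/
theorem stmt5 (N k : ℕ) (E' : Finset (Fin N × Fin N))
    (hk : IsGreatest {c | ∃ Mt : Finset (Fin N × Fin N),
      IsMatching Mt ∧ Mt ⊆ E' ∧ c = Mt.card} k) :
    IsLeast {c | ∃ f : Fin N → Fin N,
      c = semiMatchingCost (fun l r => if (l, r) ∈ E' then 1 else 2) f}
      (2 * N - k) := by
  classical
  constructor
  · obtain ⟨Mt, hMt, hsub, hkcard⟩ := hk.1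
    set A : Finset (Fin N) := Mt.image Prod.fst with hA
    set B : Finset (Fin N) := Mt.image Prod.snd with hB
    have hAcard : A.card = k := by
      rw [hA, Finset.card_image_of_injOn, hkcard]
      intro e he e' he' h1
      by_contra hne
      exact (hMt e he e' he' hne).1 h1
    have hBcard : B.card = k := by
      rw [hB, Finset.card_image_of_injOn, hkcard]
      intro e he e' he' h2
      by_contra hne
      exact (hMt e he e' he' hne).2 h2
    have hcc : Aᶜ.card = Bᶜ.card := by
      rw [Finset.card_compl, Finset.card_compl, hAcard, hBcard]
    set e : (Aᶜ : Finset (Fin N)) ≃ (Bᶜ : Finset (Fin N)) := Finset.equivOfCardEq hcc with he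
    set f : Fin N → Fin N := fun l =>
      if h : l ∈ A then (Finset.mem_image.mp h).choose.2
      else (e ⟨l, Finset.mem_compl.mpr h⟩ : Fin N) with hf
    -- key properties
    have hf1 : ∀ l (h : l ∈ A), (l, f l) ∈ Mt := by
      intro l h
      have spec := (Finset.mem_image.mp h).choose_spec
      have : f l = (Finset.mem_image.mp h).choose.2 := by rw [hf]; exact dif_pos h
      rw [this]
      have heq : ((Finset.mem_image.mp h).choose.1, (Finset.mem_image.mp h).choose.2)
          = (Finset.mem_image.mp h).choose := rfl
      rw [spec.2] at heq
      rw [heq]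
      exact spec.1
    have hf2 : ∀ l (h : l ∉ A), f l ∉ B := by
      intro l h
      have : f l = (e ⟨l, Finset.mem_compl.mpr h⟩ : Fin N) := by rw [hf]; exact dif_neg h
      rw [this]
      exact Finset.mem_compl.mp (e ⟨l, Finset.mem_compl.mpr h⟩).2
    have hinj : Function.Injective f := by
      intro l1 l2 hfl
      by_cases h1 : l1 ∈ A <;> by_cases h2 : l2 ∈ A
      · by_contra hne
        have m1 := hf1 l1 h1
        have m2 := hf1 l2 h2
        have : (l1, f l1) ≠ (l2, f l2) := by
          intro hpe; exact hne (congrArg Prod.fst hpe)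
        exact (hMt _ m1 _ m2 this).2 hfl
      · exfalso
        apply hf2 l2 h2
        rw [← hfl]
        exact Finset.mem_image.mpr ⟨(l1, f l1), hf1 l1 h1, rfl⟩
      · exfalso
        apply hf2 l1 h1
        rw [hfl]
        exact Finset.mem_image.mpr ⟨(l2, f l2), hf1 l2 h2, rfl⟩
      · have e1 : f l1 = (e ⟨l1, Finset.mem_compl.mpr h1⟩ : Fin N) := by rw [hf]; exact dif_neg h1
        have e2 : f l2 = (e ⟨l2, Finset.mem_compl.mpr h2⟩ : Fin N) := by rw [hf]; exact dif_neg h2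
        rw [e1, e2] at hfl
        have := e.injective (Subtype.coe_injective hfl)
        exact congrArg Subtype.val this
    have hbij : Function.Bijective f := Finite.injective_iff_bijective.mp hinj
    set Eqv : Fin N ≃ Fin N := Equiv.ofBijective f hbij with hE
    have hfeq : ∀ l, Eqv l = f l := fun l => rfl
    have hfib : ∀ r, Finset.univ.filter (fun l => f l = r) = {Eqv.symm r} := by
      intro r
      ext l
      simp only [Finset.mem_filter, Finset.mem_univ, true_and, Finset.mem_singleton]
      constructor
      · intro h
        have : Eqv l = r := h
        rw [← this, Equiv.symm_apply_apply]
      · rintro rfl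
        exact Eqv.apply_symm_apply r
    refine ⟨f, ?_⟩
    set w : Fin N → Fin N → ℕ := fun l r => if (l, r) ∈ E' then 1 else 2 with hw
    have hcost1 : semiMatchingCost w f = ∑ r : Fin N, w (Eqv.symm r) r := by
      rw [semiMatchingCost]
      apply Finset.sum_congr rfl
      intro r _
      rw [hfib r]
      simp [nodeCost_singleton]
    have hcost2 : ∑ r : Fin N, w (Eqv.symm r) r = ∑ l : Fin N, w l (f l) := by
      rw [← Equiv.sum_comp Eqv.symm (fun l => w l (f l))]
      apply Finset.sum_congr rfl
      intro r _
      show w (Eqv.symm r) r = w (Eqv.symm r) (f (Eqv.symm r))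
      congr 1
      exact (Eqv.apply_symm_apply r).symm
    set S : Finset (Fin N) := Finset.univ.filter (fun l => (l, f l) ∈ E') with hS
    have hSk : S.card = k := by
      have hle : S.card ≤ k := by
        have hinj2 : Set.InjOn (fun l => (l, f l)) S := by
          intro a _ b _ hab
          exact congrArg Prod.fst hab
        have hmem : (S.image (fun l => (l, f l))).card ∈ {c | ∃ Mt : Finset (Fin N × Fin N),
            IsMatching Mt ∧ Mt ⊆ E' ∧ c = Mt.card} := by
          refine ⟨S.image (fun l => (l, f l)), ?_, ?_, rfl⟩
          · rintro p hp q hq hne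
            obtain ⟨a, -, rfl⟩ := Finset.mem_image.mp hp
            obtain ⟨b, -, rfl⟩ := Finset.mem_image.mp hq
            have hab : a ≠ b := by rintro rfl; exact hne rfl
            exact ⟨hab, fun h => hab (hinj h)⟩
          · intro p hp
            obtain ⟨a, ha, rfl⟩ := Finset.mem_image.mp hp
            exact (Finset.mem_filter.mp ha).2
        have := hk.2 hmem
        rwa [Finset.card_image_of_injOn hinj2] at this
      have hge : k ≤ S.card := by
        rw [← hAcard]
        apply Finset.card_le_card
        intro l hl
        rw [hS, Finset.mem_filter]
        exact ⟨Finset.mem_univ _, hsub (hf1 l hl)⟩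
      omega
    have hkN : k ≤ N := by
      rw [← hSk]
      calc S.card ≤ Finset.univ.card := Finset.card_le_univ S
        _ = N := by simp
    have hcost3 : ∑ l : Fin N, w l (f l) = 2 * N - k := by
      have hsplit := Finset.card_filter_add_card_filter_not
        (s := (Finset.univ : Finset (Fin N))) (p := fun l => (l, f l) ∈ E')
      rw [Finset.card_univ, Fintype.card_fin] at hsplit
      rw [hw]
      rw [Finset.sum_ite]
      simp only [Finset.sum_const, smul_eq_mul]
      rw [← hS] at *
      omega
    rw [hcost1, hcost2, hcost3]
  · rintro c ⟨f, rfl⟩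
    set w : Fin N → Fin N → ℕ := fun l r => if (l, r) ∈ E' then 1 else 2 with hw
    set T : Finset (Fin N) := Finset.univ.filter (fun r => ∃ l, f l = r ∧ (l, r) ∈ E') with hT
    have hTk : T.card ≤ k := by
      set g : {x // x ∈ T} → Fin N × Fin N :=
        fun r => ((Finset.mem_filter.mp r.2).2.choose, r.1) with hg
      have key : ∀ r : {x // x ∈ T}, f (g r).1 = r.1 ∧ ((g r).1, r.1) ∈ E' :=
        fun r => (Finset.mem_filter.mp r.2).2.choose_spec
      have hginj : Function.Injective g := by
        intro r r' h
        have : r.1 = r'.1 := congrArg Prod.snd h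
        exact Subtype.ext this
      have hcard : (T.attach.image g).card = T.card := by
        rw [Finset.card_image_of_injective _ hginj, Finset.card_attach]
      have hmem : (T.attach.image g).card ∈ {c | ∃ Mt : Finset (Fin N × Fin N),
          IsMatching Mt ∧ Mt ⊆ E' ∧ c = Mt.card} := by
        refine ⟨T.attach.image g, ?_, ?_, rfl⟩
        · rintro e he e' he' hne
          obtain ⟨r, -, rfl⟩ := Finset.mem_image.mp he
          obtain ⟨r', -, rfl⟩ := Finset.mem_image.mp he'
          have hrr : r.1 ≠ r'.1 := by
            intro h; exact hne (by rw [Subtype.ext h])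
          constructor
          · intro h1
            apply hrr
            rw [← (key r).1, ← (key r').1, h1]
          · exact hrr
        · intro e he
          obtain ⟨r, -, rfl⟩ := Finset.mem_image.mp he
          have := (key r).2
          simpa [hg] using this
      rw [← hcard]
      exact hk.2 hmem
    have hN : N = ∑ r : Fin N, (Finset.univ.filter fun l => f l = r).card := by
      have := Finset.card_eq_sum_card_fiberwise
        (s := (Finset.univ : Finset (Fin N))) (t := Finset.univ) (f := f)
        (fun x _ => Finset.mem_univ _)
      simpa using this
    have hsum : 2 * N ≤ semiMatchingCost w f + T.card := by
      have hTcard : T.card = ∑ r : Fin N,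
          if (∃ l, f l = r ∧ (l, r) ∈ E') then 1 else 0 := by
        rw [hT, Finset.card_filter]
      rw [semiMatchingCost, hTcard, ← Finset.sum_add_distrib]
      have h2N : 2 * N = ∑ r : Fin N, 2 * (Finset.univ.filter fun l => f l = r).card := by
        conv_lhs => rw [hN]
        rw [Finset.mul_sum]
      rw [h2N]
      apply Finset.sum_le_sum
      intro r _
      by_cases hp : ∃ l, f l = r ∧ (l, r) ∈ E'
      · rw [if_pos hp]
        have := nodeCost_lb_one
          (((Finset.univ.filter fun l => f l = r)).val.map fun l => w l r) ?_
        · rw [Multiset.card_map] at this; exact this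
        · intro x hx
          obtain ⟨l, -, rfl⟩ := Multiset.mem_map.mp hx
          simp only [hw]
          split <;> omega
      · rw [if_neg hp, add_zero]
        have := nodeCost_lb_two
          (((Finset.univ.filter fun l => f l = r)).val.map fun l => w l r) ?_
        · rw [Multiset.card_map] at this; exact this
        · intro x hx
          obtain ⟨l, hl, rfl⟩ := Multiset.mem_map.mp hx
          have hfl : f l = r := by simpa using hl
          have : (l, r) ∉ E' := fun hmem => hp ⟨l, hfl, hmem⟩
          simp [hw, this]
    omega
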